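/- Let (S, d) be a metric space, A ⊆ S nonempty, and (A_N) a decreasing sequence of subsets with A ⊆ A_{N+1} ⊆ A_N ⊆ A_1 for all N, such that there are ε_N → 0 with every point of A_N within distance ε_N of A. Let f : S → ℝ be bounded on A_1 and satisfy the following uniform continuity condition near the boundary: for every ε > 0 there is δ > 0 such that |f(s) − f(t)| < ε whenever s ∈ A_1 \ interior(A), t ∈ A_1 and d(s, t) < δ. Then sup_{s ∈ A_N} f(s) → sup_{t ∈ A} f(t) as N → ∞. (Paper: Lemma A.3 (lem:ConvergenceMaxima), part (iii).) -/

import Mathlib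

open Filter

/-- Lemma A.3 (lem:ConvergenceMaxima), part (iii). -/
theorem sup_tendsto_of_shrinking_sets {S : Type*} [MetricSpace S]
    (A : Set S) (hA : A.Nonempty) (Aseq : ℕ → Set S)
    (hdec : ∀ N, Aseq (N + 1) ⊆ Aseq N) (hsub : ∀ N, A ⊆ Aseq N)
    (ε : ℕ → ℝ) (hε : Tendsto ε atTop (nhds 0))
    (hclose : ∀ N, ∀ s ∈ Aseq N, ∃ t ∈ A, dist s t ≤ ε N)
    (f : S → ℝ) (hbd : ∃ M, ∀ s ∈ Aseq 0, |f s| ≤ M)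
    (hcont : ∀ e > 0, ∃ δ > 0, ∀ s ∈ Aseq 0 \ interior A, ∀ t ∈ Aseq 0,
      dist s t < δ → |f s - f t| < e) :
    Tendsto (fun N => sSup (f '' Aseq N)) atTop (nhds (sSup (f '' A))) := by
  obtain ⟨M, hM⟩ := hbd
  have hsub0 : ∀ N, Aseq N ⊆ Aseq 0 := by
    intro N
    induction N with
    | zero => exact subset_rfl
    | succ n ih => exact (hdec n).trans ih
  have hbdd : ∀ N, BddAbove (f '' Aseq N) := by
    intro N
    refine ⟨M, ?_⟩
    rintro y ⟨s, hs, rfl⟩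
    exact (abs_le.1 (hM s (hsub0 N hs))).2
  have hbddA : BddAbove (f '' A) := by
    refine ⟨M, ?_⟩
    rintro y ⟨s, hs, rfl⟩
    exact (abs_le.1 (hM s (hsub 0 hs))).2
  set L := sSup (f '' A) with hL
  have hlow : ∀ N, L ≤ sSup (f '' Aseq N) := fun N =>
    csSup_le_csSup (hbdd N) (hA.image f) (Set.image_mono (hsub N))
  rw [Metric.tendsto_atTop]
  intro e he
  obtain ⟨δ, hδ, hcon⟩ := hcont (e/2) (by linarith)
  obtain ⟨N0, hN0⟩ := (Metric.tendsto_atTop.1 hε) δ hδ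
  refine ⟨N0, fun N hN => ?_⟩
  have hub : ∀ s ∈ Aseq N, f s ≤ L + e/2 := by
    intro s hs
    by_cases hint : s ∈ interior A
    · have : f s ≤ L := le_csSup hbddA ⟨s, interior_subset hint, rfl⟩
      linarith
    · obtain ⟨t, ht, hdist⟩ := hclose N s hs
      have hεN : ε N < δ := by
        have := hN0 N hN
        rw [Real.dist_eq, sub_zero] at this
        exact (le_abs_self _).trans_lt this
      have habs := hcon s ⟨hsub0 N hs, hint⟩ t (hsub 0 ht) (hdist.trans_lt hεN)
      have hft : f t ≤ L := le_csSup hbddA ⟨t, ht, rfl⟩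
      have h2 := abs_lt.1 habs
      linarith [h2.1, h2.2]
  have hsup : sSup (f '' Aseq N) ≤ L + e/2 := by
    refine csSup_le ((hA.mono (hsub N)).image f) ?_
    rintro y ⟨s, hs, rfl⟩
    exact hub s hs
  rw [Real.dist_eq, abs_of_nonneg (by linarith [hlow N])]
  linarith [hlow N]
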